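/- Let p_{ijk} (i,j,k ∈ {1,2}) be nonnegative reals satisfying the nine supermodularity inequalities p_{111}p_{222} ≥ p_{112}p_{221}, p_{111}p_{222} ≥ p_{121}p_{212}, p_{111}p_{222} ≥ p_{211}p_{122}, p_{112}p_{222} ≥ p_{122}p_{212}, p_{121}p_{222} ≥ p_{122}p_{221}, p_{211}p_{222} ≥ p_{212}p_{221}, p_{111}p_{122} ≥ p_{112}p_{121}, p_{111}p_{212} ≥ p_{112}p_{211}, p_{111}p_{221} ≥ p_{121}p_{211}. Then p_{111}p_{222} + p_{221}p_{112} − p_{211}p_{122} − p_{121}p_{212} ≥ 0. -/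
import Mathlib

/-- supermodularity implies
p111p222 + p221p112 − p211p122 − p121p212 ≥ 0. -/
theorem stmt_3
    (p111 p112 p121 p122 p211 p212 p221 p222 : ℝ)
    (hnn : 0 ≤ p111 ∧ 0 ≤ p112 ∧ 0 ≤ p121 ∧ 0 ≤ p122 ∧
           0 ≤ p211 ∧ 0 ≤ p212 ∧ 0 ≤ p221 ∧ 0 ≤ p222)
    (h1 : p111 * p222 ≥ p112 * p221)
    (h2 : p111 * p222 ≥ p121 * p212)
    (h3 : p111 * p222 ≥ p211 * p122)
    (h4 : p112 * p222 ≥ p122 * p212)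
    (h5 : p121 * p222 ≥ p122 * p221)
    (h6 : p211 * p222 ≥ p212 * p221)
    (h7 : p111 * p122 ≥ p112 * p121)
    (h8 : p111 * p212 ≥ p112 * p211)
    (h9 : p111 * p221 ≥ p121 * p211) :
    p111 * p222 + p221 * p112 - p211 * p122 - p121 * p212 ≥ 0 := by
  obtain ⟨n1, n2, n3, n4, n5, n6, n7, n8⟩ := hnn
  set A := p111 * p222 with hA
  set B := p211 * p122 with hB
  set C := p121 * p212 with hC
  set D := p221 * p112 with hD
  have hBnn : 0 ≤ B := mul_nonneg n5 n4
  have hCnn : 0 ≤ C := mul_nonneg n3 n6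
  have hDnn : 0 ≤ D := mul_nonneg n7 n2
  have hAD : A * D ≥ B * C := by
    have := mul_le_mul h4.le h9.le (mul_nonneg n3 n5) (mul_nonneg n2 n8)
    nlinarith [this]
  rcases eq_or_lt_of_le (hBnn.trans h3.le : (0:ℝ) ≤ A) with hA0 | hApos
  · have hB0 : B = 0 := le_antisymm (by linarith) hBnn
    have hC0 : C = 0 := le_antisymm (by linarith) hCnn
    linarith
  · have key : A * (A + D - B - C) ≥ 0 := by nlinarith [mul_nonneg (sub_nonneg.2 h3.le) (sub_nonneg.2 h2.le)]
    nlinarith [key]
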